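/- For the Regge–Wheeler potential V(r) = (1 − 2m/r)[ℓ(ℓ+1)/r² + 2m(1−s²)/r³] of a Schwarzschild black hole, with m > 0 and integers 0 ≤ s ≤ ℓ, the integral of V with respect to the tortoise coordinate equals ∫_{2m}^{∞} [ℓ(ℓ+1)/r² + 2m(1−s²)/r³] dr = (2ℓ(ℓ+1) + (1−s²))/(4m). Consequently the greybody bound T ≥ sech²{(1/(2ω))∫V dr*} takes the explicit form T ≥ sech²{(2ℓ(ℓ+1) + 1 − s²)/(8ωm)}. -/

import Mathlib

open MeasureTheory Set

lemma integral_Ioi_one_div_sq {c : ℝ} (hc : 0 < c) :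
    ∫ r in Set.Ioi c, (1 / r^2 : ℝ) = 1 / c := by
  have h := integral_Ioi_rpow_of_lt (a := (-2 : ℝ)) (by norm_num) hc
  rw [show ∫ r in Set.Ioi c, (1 / r^2 : ℝ) = ∫ r in Set.Ioi c, r ^ (-2 : ℝ) from ?_, h]
  · rw [show (-2 : ℝ) + 1 = -1 by norm_num, Real.rpow_neg_one]
    field_simp
  · refine setIntegral_congr_fun measurableSet_Ioi (fun r hr => ?_)
    have hr0 : (0:ℝ) < r := hc.trans hr
    rw [Real.rpow_neg hr0.le, Real.rpow_two]
    simp [one_div]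

lemma integral_Ioi_one_div_cube {c : ℝ} (hc : 0 < c) :
    ∫ r in Set.Ioi c, (1 / r^3 : ℝ) = 1 / (2 * c^2) := by
  have h := integral_Ioi_rpow_of_lt (a := (-3 : ℝ)) (by norm_num) hc
  rw [show ∫ r in Set.Ioi c, (1 / r^3 : ℝ) = ∫ r in Set.Ioi c, r ^ (-3 : ℝ) from ?_, h]
  · rw [show (-3 : ℝ) + 1 = -2 by norm_num]
    rw [show (-2 : ℝ) = -(2:ℕ) by norm_num, Real.rpow_neg hc.le, Real.rpow_natCast]
    field_simp
    ring
  · refine setIntegral_congr_fun measurableSet_Ioi (fun r hr => ?_)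
    have hr0 : (0:ℝ) < r := hc.trans hr
    rw [show (-3 : ℝ) = -(3:ℕ) by norm_num, Real.rpow_neg hr0.le, Real.rpow_natCast]
    simp [one_div]

lemma integrable_inv_pow {c : ℝ} (hc : 0 < c) (n : ℕ) (hn : 2 ≤ n) :
    IntegrableOn (fun r : ℝ => 1 / r^n) (Set.Ioi c) := by
  have h := integrableOn_Ioi_rpow_of_lt (a := -(n:ℝ)) (by
    have : (2:ℝ) ≤ n := by exact_mod_cast hn
    linarith) hc
  refine h.congr_fun (fun r hr => ?_) measurableSet_Ioi
  have hr0 : (0:ℝ) < r := hc.trans hr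
  beta_reduce
  rw [Real.rpow_neg hr0.le, Real.rpow_natCast]
  simp [one_div]

theorem regge_wheeler_integral (m ω T : ℝ) (hm : 0 < m) (hω : 0 < ω)
    (s ℓ : ℕ) (hs : s ≤ ℓ)
    (hT : T ≥ (1 / Real.cosh ((1/(2*ω)) *
      ∫ r in Set.Ioi (2*m),
        ((ℓ * (ℓ + 1) : ℝ) / r^2 + 2*m*(1 - (s:ℝ)^2) / r^3)))^2) :
    (∫ r in Set.Ioi (2*m),
        ((ℓ * (ℓ + 1) : ℝ) / r^2 + 2*m*(1 - (s:ℝ)^2) / r^3))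
      = (2 * (ℓ * (ℓ + 1) : ℝ) + (1 - (s:ℝ)^2)) / (4*m) ∧
    T ≥ (1 / Real.cosh ((2 * (ℓ * (ℓ + 1) : ℝ) + 1 - (s:ℝ)^2) / (8*ω*m)))^2 := by
  have hc : (0:ℝ) < 2*m := by linarith
  set a : ℝ := (ℓ * (ℓ + 1) : ℝ)
  set b : ℝ := 2*m*(1 - (s:ℝ)^2)
  have hint : (∫ r in Set.Ioi (2*m), (a / r^2 + b / r^3))
      = (2 * a + (1 - (s:ℝ)^2)) / (4*m) := by
    have h1 : IntegrableOn (fun r : ℝ => a * (1 / r^2)) (Set.Ioi (2*m)) :=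
      (integrable_inv_pow hc 2 le_rfl).const_mul a
    have h2 : IntegrableOn (fun r : ℝ => b * (1 / r^3)) (Set.Ioi (2*m)) :=
      (integrable_inv_pow hc 3 (by norm_num)).const_mul b
    have : (∫ r in Set.Ioi (2*m), (a / r^2 + b / r^3))
        = (∫ r in Set.Ioi (2*m), (a * (1 / r^2) + b * (1 / r^3))) := by
      congr 1; ext r; ring
    rw [this, integral_add h1 h2, integral_const_mul, integral_const_mul,
      integral_Ioi_one_div_sq hc, integral_Ioi_one_div_cube hc]
    have hm' : m ≠ 0 := hm.ne'
    field_simp [b]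
    ring
  refine ⟨hint, ?_⟩
  rw [hint] at hT
  have heq : (2 * a + 1 - (s:ℝ)^2) / (8*ω*m) = 1 / (2*ω) * ((2 * a + (1 - (s:ℝ)^2)) / (4*m)) := by
    field_simp
    ring
  rw [heq]
  exact hT
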